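/- Let Ω = {x ∈ ℝ² : x₁ > −1, x₂ > −1, x₁ + x₂ < 1}, and on Ω set ℓ₁(x) = x₁ + 1, ℓ₂(x) = x₂ + 1, ℓ₃(x) = 1 − x₁ − x₂ and φ₀(x) = (1/2)(ℓ₁ log ℓ₁ + ℓ₂ log ℓ₂ + ℓ₃ log ℓ₃). Let G(x) be the Hessian matrix of φ₀ at x, which is invertible on Ω, and set H(x) = G(x)⁻¹. Define the operator 𝔏 on smooth complex-valued functions on Ω × ℝ² by (𝔏 u)(x,t) = −Σ_{i,j} ∂_{x_i}(H_{ij} ∂_{x_j} u) − Σ_{i,j} G_{ij}(x) ∂_{t_i}∂_{t_j} u. Then each of the six functions v₁ = √(ℓ₁ℓ₃) e^{−√−1 t₁}, v₂ = √(ℓ₁ℓ₂) e^{−√−1 (t₁ − t₂)}, v₃ = √(ℓ₂ℓ₃) e^{−√−1 t₂}, v₄ = √(ℓ₁ℓ₂) e^{√−1 (t₁ − t₂)}, v₅ = √(ℓ₁ℓ₃) e^{√−1 t₁}, v₆ = √(ℓ₂ℓ₃) e^{√−1 t₂} satisfies 𝔏 v = 2 v on Ω × ℝ². -/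

import Mathlib

/-- Partial derivative of `f` in the `j`-th coordinate direction at `x`. -/
noncomputable def pd (f : (Fin 2 → ℝ) → ℝ) (j : Fin 2) (x : Fin 2 → ℝ) : ℝ :=
  fderiv ℝ f x (Pi.single j 1)

/-- Partial derivative in the `i`-th action (`x`) direction. -/
noncomputable def pdx (f : (Fin 2 → ℝ) × (Fin 2 → ℝ) → ℂ) (i : Fin 2)
    (p : (Fin 2 → ℝ) × (Fin 2 → ℝ)) : ℂ :=
  fderiv ℝ f p (Pi.single i 1, 0)

/-- Partial derivative in the `i`-th angle (`t`) direction. -/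
noncomputable def pdt (f : (Fin 2 → ℝ) × (Fin 2 → ℝ) → ℂ) (i : Fin 2)
    (p : (Fin 2 → ℝ) × (Fin 2 → ℝ)) : ℂ :=
  fderiv ℝ f p (0, Pi.single i 1)

/-- The defining affine functions of the moment simplex of `ℂP²`. -/
def ell1 (x : Fin 2 → ℝ) : ℝ := x 0 + 1
def ell2 (x : Fin 2 → ℝ) : ℝ := x 1 + 1
def ell3 (x : Fin 2 → ℝ) : ℝ := 1 - x 0 - x 1

/-- The Guillemin potential of the moment simplex of `ℂP²`. -/
noncomputable def phi0 (x : Fin 2 → ℝ) : ℝ :=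
  (1 / 2) * (ell1 x * Real.log (ell1 x) + ell2 x * Real.log (ell2 x)
    + ell3 x * Real.log (ell3 x))

/-- The Hessian matrix of the Guillemin potential. -/
noncomputable def Gmat (x : Fin 2 → ℝ) : Matrix (Fin 2) (Fin 2) ℝ :=
  Matrix.of fun i j => pd (fun y => pd phi0 j y) i x

/-- The inverse Hessian matrix. -/
noncomputable def Hmat (x : Fin 2 → ℝ) : Matrix (Fin 2) (Fin 2) ℝ := (Gmat x)⁻¹

/-- The complex toric Laplacian (soliton vector `a = 0`) in action-angle coordinates. -/
noncomputable def Lop (u : (Fin 2 → ℝ) × (Fin 2 → ℝ) → ℂ)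
    (p : (Fin 2 → ℝ) × (Fin 2 → ℝ)) : ℂ :=
  -(∑ i, ∑ j, pdx (fun q => (Hmat q.1 i j : ℂ) * pdx u j q) i p)
    - ∑ i, ∑ j, (Gmat p.1 i j : ℂ) * pdt (fun q => pdt u j q) i p

/-- The six root functions of `ℂP²` in action-angle coordinates. -/
noncomputable def v1 (p : (Fin 2 → ℝ) × (Fin 2 → ℝ)) : ℂ :=
  (Real.sqrt (ell1 p.1 * ell3 p.1) : ℂ) * Complex.exp (-(Complex.I * (p.2 0 : ℂ)))
noncomputable def v2 (p : (Fin 2 → ℝ) × (Fin 2 → ℝ)) : ℂ :=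
  (Real.sqrt (ell1 p.1 * ell2 p.1) : ℂ)
    * Complex.exp (-(Complex.I * ((p.2 0 : ℂ) - (p.2 1 : ℂ))))
noncomputable def v3 (p : (Fin 2 → ℝ) × (Fin 2 → ℝ)) : ℂ :=
  (Real.sqrt (ell2 p.1 * ell3 p.1) : ℂ) * Complex.exp (-(Complex.I * (p.2 1 : ℂ)))
noncomputable def v4 (p : (Fin 2 → ℝ) × (Fin 2 → ℝ)) : ℂ :=
  (Real.sqrt (ell1 p.1 * ell2 p.1) : ℂ)
    * Complex.exp (Complex.I * ((p.2 0 : ℂ) - (p.2 1 : ℂ)))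
noncomputable def v5 (p : (Fin 2 → ℝ) × (Fin 2 → ℝ)) : ℂ :=
  (Real.sqrt (ell1 p.1 * ell3 p.1) : ℂ) * Complex.exp (Complex.I * (p.2 0 : ℂ))
noncomputable def v6 (p : (Fin 2 → ℝ) × (Fin 2 → ℝ)) : ℂ :=
  (Real.sqrt (ell2 p.1 * ell3 p.1) : ℂ) * Complex.exp (Complex.I * (p.2 1 : ℂ))



noncomputable section ToolKit

/-- The open moment simplex. -/
def Om : Set (Fin 2 → ℝ) := {x | -1 < x 0 ∧ -1 < x 1 ∧ x 0 + x 1 < 1}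

lemma isOpen_Om : IsOpen Om := by
  have h1 : IsOpen {x : Fin 2 → ℝ | -1 < x 0} := isOpen_lt continuous_const (continuous_apply 0)
  have h2 : IsOpen {x : Fin 2 → ℝ | -1 < x 1} := isOpen_lt continuous_const (continuous_apply 1)
  have h3 : IsOpen {x : Fin 2 → ℝ | x 0 + x 1 < 1} :=
    isOpen_lt ((continuous_apply 0).add (continuous_apply 1)) continuous_const
  have he : Om = {x : Fin 2 → ℝ | -1 < x 0} ∩ ({x | -1 < x 1} ∩ {x | x 0 + x 1 < 1}) := by
    ext x; simp [Om, and_assoc]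
  rw [he]; exact h1.inter (h2.inter h3)

def Pr (j : Fin 2) : (Fin 2 → ℝ) →L[ℝ] ℝ := ContinuousLinearMap.proj j

/-- CLM with given coefficients on the two coordinates. -/
def DD (a b : ℝ) : (Fin 2 → ℝ) →L[ℝ] ℝ := a • Pr 0 + b • Pr 1

@[simp] lemma DD_apply (a b : ℝ) (y : Fin 2 → ℝ) : DD a b y = a * y 0 + b * y 1 := by
  simp [DD, Pr, smul_eq_mul]

@[simp] lemma DD_e0 (a b : ℝ) : DD a b (Pi.single 0 1) = a := by
  simp [DD_apply, Pi.single_apply]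

@[simp] lemma DD_e1 (a b : ℝ) : DD a b (Pi.single 1 1) = b := by
  simp [DD_apply, Pi.single_apply]

lemma HDD.congr {f : (Fin 2 → ℝ) → ℝ} {a b a' b' : ℝ} {x : Fin 2 → ℝ}
    (h : HasFDerivAt f (DD a b) x) (h1 : a = a') (h2 : b = b') :
    HasFDerivAt f (DD a' b') x := by rw [← h1, ← h2]; exact h

lemma hdd_const (c : ℝ) (x : Fin 2 → ℝ) :
    HasFDerivAt (fun _ : Fin 2 → ℝ => c) (DD 0 0) x := by
  have h : DD (0:ℝ) 0 = 0 := by simp [DD]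
  rw [h]; exact hasFDerivAt_const c x

lemma hdd_x0 (x : Fin 2 → ℝ) : HasFDerivAt (fun y : Fin 2 → ℝ => y 0) (DD 1 0) x := by
  refine ((Pr 0).hasFDerivAt).congr_fderiv ?_
  · ext y; simp [Pr]
lemma hdd_x1 (x : Fin 2 → ℝ) : HasFDerivAt (fun y : Fin 2 → ℝ => y 1) (DD 0 1) x := by
  refine ((Pr 1).hasFDerivAt).congr_fderiv ?_
  · ext y; simp [Pr]

variable {f g : (Fin 2 → ℝ) → ℝ} {a b c d : ℝ} {x : Fin 2 → ℝ}

lemma HDD.add (hf : HasFDerivAt f (DD a b) x) (hg : HasFDerivAt g (DD c d) x) :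
    HasFDerivAt (fun y => f y + g y) (DD (a + c) (b + d)) x := by
  refine (hf.add hg).congr_fderiv ?_; ext y; simp; ring

lemma HDD.sub (hf : HasFDerivAt f (DD a b) x) (hg : HasFDerivAt g (DD c d) x) :
    HasFDerivAt (fun y => f y - g y) (DD (a - c) (b - d)) x := by
  refine (hf.sub hg).congr_fderiv ?_; ext y; simp; ring

lemma HDD.mul (hf : HasFDerivAt f (DD a b) x) (hg : HasFDerivAt g (DD c d) x) :
    HasFDerivAt (fun y => f y * g y) (DD (f x * c + g x * a) (f x * d + g x * b)) x := by
  refine (hf.mul hg).congr_fderiv ?_; ext y; simp; ring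

lemma HDD.cmul (hf : HasFDerivAt f (DD a b) x) (c : ℝ) :
    HasFDerivAt (fun y => c * f y) (DD (c * a) (c * b)) x := by
  refine (hf.const_mul c).congr_fderiv ?_; ext y; simp; ring

lemma HDD.inv (hf : HasFDerivAt f (DD a b) x) (h0 : f x ≠ 0) :
    HasFDerivAt (fun y => (f y)⁻¹) (DD (-(a / f x ^ 2)) (-(b / f x ^ 2))) x := by
  have h := (hasDerivAt_inv h0).comp_hasFDerivAt x hf
  refine (h).congr_fderiv ?_
  ext y; simp [smul_eq_mul]; ring

lemma HDD.div (hf : HasFDerivAt f (DD a b) x) (hg : HasFDerivAt g (DD c d) x)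
    (h0 : g x ≠ 0) :
    HasFDerivAt (fun y => f y / g y)
      (DD ((a * g x - f x * c) / g x ^ 2) ((b * g x - f x * d) / g x ^ 2)) x := by
  have h := hf.mul (HDD.inv hg h0)
  refine HasFDerivAt.congr_of_eventuallyEq ?_ (by filter_upwards with y; rw [div_eq_mul_inv])
  refine (h).congr_fderiv ?_
  ext y; simp [smul_eq_mul]
  field_simp
  try ring

lemma HDD.sqrt (hf : HasFDerivAt f (DD a b) x) (h0 : 0 < f x) :
    HasFDerivAt (fun y => Real.sqrt (f y))
      (DD (a * Real.sqrt (f x) / (2 * f x)) (b * Real.sqrt (f x) / (2 * f x))) x := by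
  have h := (Real.hasDerivAt_sqrt (ne_of_gt h0)).comp_hasFDerivAt x hf
  refine (h).congr_fderiv ?_
  set s := Real.sqrt (f x) with hsdef
  have hsp : 0 < s := Real.sqrt_pos.mpr h0
  have hss : s * s = f x := Real.mul_self_sqrt h0.le
  ext y
  rw [← hss]
  simp [smul_eq_mul]
  field_simp
  try ring

lemma HDD.log (hf : HasFDerivAt f (DD a b) x) (h0 : f x ≠ 0) :
    HasFDerivAt (fun y => Real.log (f y)) (DD (a / f x) (b / f x)) x := by
  have h := (Real.hasDerivAt_log h0).comp_hasFDerivAt x hf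
  refine (h).congr_fderiv ?_
  ext y; simp [smul_eq_mul]
  field_simp
  try ring

lemma HDD.mullog (hf : HasFDerivAt f (DD a b) x) (h0 : f x ≠ 0) :
    HasFDerivAt (fun y => f y * Real.log (f y))
      (DD ((Real.log (f x) + 1) * a) ((Real.log (f x) + 1) * b)) x := by
  have hd : HasDerivAt (fun t : ℝ => t * Real.log t) (1 * Real.log (f x) + f x * (f x)⁻¹)
      (f x) := (hasDerivAt_id (f x)).mul (Real.hasDerivAt_log h0)
  have h := hd.comp_hasFDerivAt x hf
  refine (h).congr_fderiv ?_
  ext y; simp [smul_eq_mul]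
  field_simp
  try ring

end ToolKit
noncomputable section Sec2

lemma mem_Om {x : Fin 2 → ℝ} (hx : x ∈ Om) :
    -1 < x 0 ∧ -1 < x 1 ∧ x 0 + x 1 < 1 := hx

lemma l1_pos {x : Fin 2 → ℝ} (hx : x ∈ Om) : 0 < ell1 x := by
  obtain ⟨h1, h2, h3⟩ := mem_Om hx; unfold ell1; linarith
lemma l2_pos {x : Fin 2 → ℝ} (hx : x ∈ Om) : 0 < ell2 x := by
  obtain ⟨h1, h2, h3⟩ := mem_Om hx; unfold ell2; linarith
lemma l3_pos {x : Fin 2 → ℝ} (hx : x ∈ Om) : 0 < ell3 x := by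
  obtain ⟨h1, h2, h3⟩ := mem_Om hx; unfold ell3; linarith

lemma hdd_ell1 (x : Fin 2 → ℝ) : HasFDerivAt ell1 (DD 1 0) x := by
  have h := HDD.add (hdd_x0 x) (hdd_const 1 x)
  exact HDD.congr h (by norm_num) (by norm_num)

lemma hdd_ell2 (x : Fin 2 → ℝ) : HasFDerivAt ell2 (DD 0 1) x := by
  have h := HDD.add (hdd_x1 x) (hdd_const 1 x)
  exact HDD.congr h (by norm_num) (by norm_num)

lemma hdd_ell3 (x : Fin 2 → ℝ) : HasFDerivAt ell3 (DD (-1) (-1)) x := by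
  have h := HDD.sub (HDD.sub (hdd_const 1 x) (hdd_x0 x)) (hdd_x1 x)
  exact HDD.congr h (by norm_num) (by norm_num)

/-- Explicit Hessian of the Guillemin potential. -/
def Gm (x : Fin 2 → ℝ) : Matrix (Fin 2) (Fin 2) ℝ :=
  Matrix.of ![![1/2 * ((ell1 x)⁻¹ + (ell3 x)⁻¹), 1/2 * (ell3 x)⁻¹],
              ![1/2 * (ell3 x)⁻¹, 1/2 * ((ell2 x)⁻¹ + (ell3 x)⁻¹)]]

@[simp] lemma Gm00 (x : Fin 2 → ℝ) : Gm x 0 0 = 1/2 * ((ell1 x)⁻¹ + (ell3 x)⁻¹) := rfl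
@[simp] lemma Gm01 (x : Fin 2 → ℝ) : Gm x 0 1 = 1/2 * (ell3 x)⁻¹ := rfl
@[simp] lemma Gm10 (x : Fin 2 → ℝ) : Gm x 1 0 = 1/2 * (ell3 x)⁻¹ := rfl
@[simp] lemma Gm11 (x : Fin 2 → ℝ) : Gm x 1 1 = 1/2 * ((ell2 x)⁻¹ + (ell3 x)⁻¹) := rfl

def h00 (x : Fin 2 → ℝ) : ℝ := 2/3 * ell1 x * (ell2 x + ell3 x)
def h01 (x : Fin 2 → ℝ) : ℝ := -(2/3 * ell1 x * ell2 x)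
def h11 (x : Fin 2 → ℝ) : ℝ := 2/3 * ell2 x * (ell1 x + ell3 x)

/-- Explicit inverse Hessian. -/
def Hm (x : Fin 2 → ℝ) : Matrix (Fin 2) (Fin 2) ℝ :=
  Matrix.of ![![h00 x, h01 x], ![h01 x, h11 x]]

@[simp] lemma Hm00 (x : Fin 2 → ℝ) : Hm x 0 0 = h00 x := rfl
@[simp] lemma Hm01 (x : Fin 2 → ℝ) : Hm x 0 1 = h01 x := rfl
@[simp] lemma Hm10 (x : Fin 2 → ℝ) : Hm x 1 0 = h01 x := rfl
@[simp] lemma Hm11 (x : Fin 2 → ℝ) : Hm x 1 1 = h11 x := rfl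

lemma hdd_h00 (x : Fin 2 → ℝ) : HasFDerivAt h00
    (DD (2/3 * ell1 x * (0 + -1) + (ell2 x + ell3 x) * (2/3 * 1))
        (2/3 * ell1 x * (1 + -1) + (ell2 x + ell3 x) * (2/3 * 0))) x :=
  HDD.mul (HDD.cmul (hdd_ell1 x) (2/3)) (HDD.add (hdd_ell2 x) (hdd_ell3 x))

lemma hdd_h01 (x : Fin 2 → ℝ) : HasFDerivAt h01
    (DD (0 - 2/3 * (ell1 x * 0 + ell2 x * 1)) (0 - 2/3 * (ell1 x * 1 + ell2 x * 0))) x := by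
  have h := HDD.sub (hdd_const 0 x) (HDD.cmul (HDD.mul (hdd_ell1 x) (hdd_ell2 x)) (2/3))
  have hfun : h01 = fun y => 0 - 2/3 * (ell1 y * ell2 y) := by
    funext y; unfold h01; ring
  rw [hfun]
  exact h

lemma hdd_h11 (x : Fin 2 → ℝ) : HasFDerivAt h11
    (DD (2/3 * ell2 x * (1 + -1) + (ell1 x + ell3 x) * (2/3 * 0))
        (2/3 * ell2 x * (0 + -1) + (ell1 x + ell3 x) * (2/3 * 1))) x :=
  HDD.mul (HDD.cmul (hdd_ell2 x) (2/3)) (HDD.add (hdd_ell1 x) (hdd_ell3 x))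

lemma hdd_phi0 {x : Fin 2 → ℝ} (hx : x ∈ Om) :
    HasFDerivAt phi0 (DD (1/2 * (Real.log (ell1 x) - Real.log (ell3 x)))
                         (1/2 * (Real.log (ell2 x) - Real.log (ell3 x)))) x := by
  have h1 := HDD.mullog (hdd_ell1 x) (ne_of_gt (l1_pos hx))
  have h2 := HDD.mullog (hdd_ell2 x) (ne_of_gt (l2_pos hx))
  have h3 := HDD.mullog (hdd_ell3 x) (ne_of_gt (l3_pos hx))
  have h := HDD.cmul (HDD.add (HDD.add h1 h2) h3) (1/2)
  exact HDD.congr h (by ring) (by ring)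

lemma pd_phi0_0 {x : Fin 2 → ℝ} (hx : x ∈ Om) :
    pd phi0 0 x = 1/2 * (Real.log (ell1 x) - Real.log (ell3 x)) := by
  unfold pd; rw [(hdd_phi0 hx).fderiv]; simp

lemma pd_phi0_1 {x : Fin 2 → ℝ} (hx : x ∈ Om) :
    pd phi0 1 x = 1/2 * (Real.log (ell2 x) - Real.log (ell3 x)) := by
  unfold pd; rw [(hdd_phi0 hx).fderiv]; simp

lemma hdd_q0 {x : Fin 2 → ℝ} (hx : x ∈ Om) :
    HasFDerivAt (fun y => 1/2 * (Real.log (ell1 y) - Real.log (ell3 y)))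
      (DD (1/2 * ((ell1 x)⁻¹ + (ell3 x)⁻¹)) (1/2 * (ell3 x)⁻¹)) x := by
  have h := HDD.cmul (HDD.sub (HDD.log (hdd_ell1 x) (ne_of_gt (l1_pos hx)))
    (HDD.log (hdd_ell3 x) (ne_of_gt (l3_pos hx)))) (1/2)
  refine HDD.congr h ?_ ?_ <;> field_simp <;> ring

lemma hdd_q1 {x : Fin 2 → ℝ} (hx : x ∈ Om) :
    HasFDerivAt (fun y => 1/2 * (Real.log (ell2 y) - Real.log (ell3 y)))
      (DD (1/2 * (ell3 x)⁻¹) (1/2 * ((ell2 x)⁻¹ + (ell3 x)⁻¹))) x := by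
  have h := HDD.cmul (HDD.sub (HDD.log (hdd_ell2 x) (ne_of_gt (l2_pos hx)))
    (HDD.log (hdd_ell3 x) (ne_of_gt (l3_pos hx)))) (1/2)
  refine HDD.congr h ?_ ?_ <;> field_simp <;> ring

lemma Gmat_eq {x : Fin 2 → ℝ} (hx : x ∈ Om) : Gmat x = Gm x := by
  have hmem : ∀ᶠ y in nhds x, y ∈ Om := isOpen_Om.mem_nhds hx
  have e0 : (fun y => pd phi0 0 y) =ᶠ[nhds x]
      (fun y => 1/2 * (Real.log (ell1 y) - Real.log (ell3 y))) :=
    hmem.mono fun y hy => pd_phi0_0 hy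
  have e1 : (fun y => pd phi0 1 y) =ᶠ[nhds x]
      (fun y => 1/2 * (Real.log (ell2 y) - Real.log (ell3 y))) :=
    hmem.mono fun y hy => pd_phi0_1 hy
  have f0 : fderiv ℝ (fun y => pd phi0 0 y) x
      = fderiv ℝ (fun y => 1/2 * (Real.log (ell1 y) - Real.log (ell3 y))) x := e0.fderiv_eq
  have f1 : fderiv ℝ (fun y => pd phi0 1 y) x
      = fderiv ℝ (fun y => 1/2 * (Real.log (ell2 y) - Real.log (ell3 y))) x := e1.fderiv_eq
  ext i j
  fin_cases i <;> fin_cases j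
  · show (fderiv ℝ (fun y => pd phi0 0 y) x) (Pi.single 0 1) = 1/2 * ((ell1 x)⁻¹ + (ell3 x)⁻¹)
    rw [f0, (hdd_q0 hx).fderiv, DD_e0]
  · show (fderiv ℝ (fun y => pd phi0 1 y) x) (Pi.single 0 1) = 1/2 * (ell3 x)⁻¹
    rw [f1, (hdd_q1 hx).fderiv, DD_e0]
  · show (fderiv ℝ (fun y => pd phi0 0 y) x) (Pi.single 1 1) = 1/2 * (ell3 x)⁻¹
    rw [f0, (hdd_q0 hx).fderiv, DD_e1]
  · show (fderiv ℝ (fun y => pd phi0 1 y) x) (Pi.single 1 1) = 1/2 * ((ell2 x)⁻¹ + (ell3 x)⁻¹)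
    rw [f1, (hdd_q1 hx).fderiv, DD_e1]

lemma Hmat_eq {x : Fin 2 → ℝ} (hx : x ∈ Om) : Hmat x = Hm x := by
  have p1 := l1_pos hx; have p2 := l2_pos hx; have p3 := l3_pos hx
  have d1 : x 0 + 1 ≠ 0 := by have := ne_of_gt p1; unfold ell1 at this; exact this
  have d2 : x 1 + 1 ≠ 0 := by have := ne_of_gt p2; unfold ell2 at this; exact this
  have d3 : 1 - x 0 - x 1 ≠ 0 := by have := ne_of_gt p3; unfold ell3 at this; exact this
  have h1 : Gm x * Hm x = 1 := by
    ext i j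
    fin_cases i <;> fin_cases j <;>
      · simp only [Matrix.mul_apply, Fin.sum_univ_two]
        simp only [Gm, Hm, Matrix.of_apply, Matrix.cons_val', Matrix.cons_val_zero,
          Matrix.cons_val_one, Matrix.head_cons, Matrix.empty_val', Matrix.cons_val_fin_one,
          Matrix.head_fin_const, Matrix.one_apply]
        norm_num [h00, h01, h11, ell1, ell2, ell3]
        field_simp
        try ring
  unfold Hmat
  rw [Gmat_eq hx]
  exact Matrix.inv_eq_right_inv h1

end Sec2
noncomputable section Sec3

abbrev EE := (Fin 2 → ℝ) × (Fin 2 → ℝ)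

/-- The angular coordinate continuous linear maps. -/
def CT (i : Fin 2) : EE →L[ℝ] ℂ :=
  Complex.ofRealCLM.comp ((Pr i).comp (ContinuousLinearMap.snd ℝ (Fin 2 → ℝ) (Fin 2 → ℝ)))

def Wc (a0 a1 : ℝ) : EE →L[ℝ] ℂ := (Complex.I * a0) • CT 0 + (Complex.I * a1) • CT 1

@[simp] lemma Wc_apply (a0 a1 : ℝ) (q : EE) :
    Wc a0 a1 q = Complex.I * a0 * q.2 0 + Complex.I * a1 * q.2 1 := by
  simp [Wc, CT, Pr, smul_eq_mul]
  try ring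

/-- The angular exponential factor. -/
def Eex (a0 a1 : ℝ) (q : EE) : ℂ := Complex.exp (Complex.I * ((a0 * q.2 0 + a1 * q.2 1 : ℝ) : ℂ))

lemma hasFDerivAt_Eex (a0 a1 : ℝ) (q : EE) :
    HasFDerivAt (Eex a0 a1) (Eex a0 a1 q • Wc a0 a1) q := by
  have hWf : (fun q : EE => Complex.I * ((a0 * q.2 0 + a1 * q.2 1 : ℝ) : ℂ)) = ⇑(Wc a0 a1) := by
    funext q; rw [Wc_apply]; push_cast; ring
  have hW : HasFDerivAt (fun q : EE => Complex.I * ((a0 * q.2 0 + a1 * q.2 1 : ℝ) : ℂ))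
      (Wc a0 a1) q := by
    rw [hWf]; exact (Wc a0 a1).hasFDerivAt
  exact (Complex.hasDerivAt_exp (Complex.I * ((a0 * q.2 0 + a1 * q.2 1 : ℝ) : ℂ))).comp_hasFDerivAt q hW

/-- Derivative of a separated product. -/
lemma hasFDerivAt_pf (a0 a1 : ℝ) (F : (Fin 2 → ℝ) → ℝ) {d e : ℝ} (q : EE)
    (hF : HasFDerivAt F (DD d e) q.1) :
    HasFDerivAt (fun q : EE => (F q.1 : ℂ) * Eex a0 a1 q)
      ((F q.1 : ℂ) • (Eex a0 a1 q • Wc a0 a1)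
        + Eex a0 a1 q • (Complex.ofRealCLM.comp
            ((DD d e).comp (ContinuousLinearMap.fst ℝ (Fin 2 → ℝ) (Fin 2 → ℝ))))) q := by
  have h1 : HasFDerivAt (fun q : EE => (F q.1 : ℂ))
      (Complex.ofRealCLM.comp ((DD d e).comp (ContinuousLinearMap.fst ℝ (Fin 2 → ℝ) (Fin 2 → ℝ)))) q :=
    Complex.ofRealCLM.hasFDerivAt.comp q (hF.comp q hasFDerivAt_fst)
  exact h1.mul (hasFDerivAt_Eex a0 a1 q)

lemma pdx_pf (a0 a1 : ℝ) (F : (Fin 2 → ℝ) → ℝ) {d e : ℝ} (i : Fin 2) (q : EE)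
    (hF : HasFDerivAt F (DD d e) q.1) :
    pdx (fun q : EE => (F q.1 : ℂ) * Eex a0 a1 q) i q
      = ((DD d e (Pi.single i 1) : ℝ) : ℂ) * Eex a0 a1 q := by
  unfold pdx
  rw [(hasFDerivAt_pf a0 a1 F q hF).fderiv]
  simp [Wc_apply, smul_eq_mul]
  ring

lemma pdt_pf (a0 a1 : ℝ) (F : (Fin 2 → ℝ) → ℝ) {d e : ℝ} (i : Fin 2) (q : EE)
    (hF : HasFDerivAt F (DD d e) q.1) :
    pdt (fun q : EE => (F q.1 : ℂ) * Eex a0 a1 q) i q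
      = (F q.1 : ℂ) * Eex a0 a1 q * Wc a0 a1 (0, Pi.single i 1) := by
  unfold pdt
  rw [(hasFDerivAt_pf a0 a1 F q hF).fderiv]
  simp [smul_eq_mul]
  ring

lemma pdt_pdt_pf (a0 a1 : ℝ) (F g0 g1 : (Fin 2 → ℝ) → ℝ) (i j : Fin 2) (p : EE) (hp : p.1 ∈ Om)
    (hF : ∀ y ∈ Om, HasFDerivAt F (DD (g0 y) (g1 y)) y) :
    pdt (fun q => pdt (fun q : EE => (F q.1 : ℂ) * Eex a0 a1 q) j q) i p
      = (F p.1 : ℂ) * Eex a0 a1 p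
          * (Wc a0 a1 (0, Pi.single j 1) * Wc a0 a1 (0, Pi.single i 1)) := by
  have hO : IsOpen {q : EE | q.1 ∈ Om} := isOpen_Om.preimage continuous_fst
  have hev : (fun q => pdt (fun q : EE => (F q.1 : ℂ) * Eex a0 a1 q) j q)
      =ᶠ[nhds p] (fun q : EE => ((F q.1 : ℂ) * Eex a0 a1 q) * Wc a0 a1 (0, Pi.single j 1)) := by
    filter_upwards [hO.mem_nhds hp] with q hq
    exact pdt_pf a0 a1 F j q (hF q.1 hq)
  have hfd : fderiv ℝ (fun q => pdt (fun q : EE => (F q.1 : ℂ) * Eex a0 a1 q) j q) p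
      = fderiv ℝ (fun q : EE => ((F q.1 : ℂ) * Eex a0 a1 q) * Wc a0 a1 (0, Pi.single j 1)) p :=
    hev.fderiv_eq
  show (fderiv ℝ (fun q => pdt (fun q : EE => (F q.1 : ℂ) * Eex a0 a1 q) j q) p)
      (0, Pi.single i 1) = _
  rw [hfd]
  rw [((hasFDerivAt_pf a0 a1 F p (hF p.1 hp)).mul_const (Wc a0 a1 (0, Pi.single j 1))).fderiv]
  simp [smul_eq_mul]
  ring

lemma pdx_H_term (a0 a1 : ℝ) (S g0 g1 FF : (Fin 2 → ℝ) → ℝ) (i j : Fin 2) {dF eF : ℝ}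
    (p : EE) (hp : p.1 ∈ Om)
    (hS : ∀ y ∈ Om, HasFDerivAt S (DD (g0 y) (g1 y)) y)
    (hFF : ∀ y ∈ Om, FF y = Hm y i j * (DD (g0 y) (g1 y) (Pi.single j 1)))
    (hFd : HasFDerivAt FF (DD dF eF) p.1) :
    pdx (fun q : EE =>
        (Hmat q.1 i j : ℂ) * pdx (fun q : EE => (S q.1 : ℂ) * Eex a0 a1 q) j q) i p
      = ((DD dF eF (Pi.single i 1) : ℝ) : ℂ) * Eex a0 a1 p := by
  have hO : IsOpen {q : EE | q.1 ∈ Om} := isOpen_Om.preimage continuous_fst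
  have hev : (fun q : EE =>
      (Hmat q.1 i j : ℂ) * pdx (fun q : EE => (S q.1 : ℂ) * Eex a0 a1 q) j q)
      =ᶠ[nhds p] (fun q : EE => (FF q.1 : ℂ) * Eex a0 a1 q) := by
    filter_upwards [hO.mem_nhds hp] with q hq
    rw [pdx_pf a0 a1 S j q (hS q.1 hq), Hmat_eq hq, hFF q.1 hq]
    push_cast
    ring
  have hfd : fderiv ℝ (fun q : EE =>
        (Hmat q.1 i j : ℂ) * pdx (fun q : EE => (S q.1 : ℂ) * Eex a0 a1 q) j q) p
      = fderiv ℝ (fun q : EE => (FF q.1 : ℂ) * Eex a0 a1 q) p := hev.fderiv_eq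
  show (fderiv ℝ (fun q : EE =>
        (Hmat q.1 i j : ℂ) * pdx (fun q : EE => (S q.1 : ℂ) * Eex a0 a1 q) j q) p)
      (Pi.single i 1, 0) = _
  rw [hfd]
  exact pdx_pf a0 a1 FF i p hFd

@[simp] lemma Wc_t0 (a0 a1 : ℝ) : Wc a0 a1 (0, Pi.single 0 1) = Complex.I * a0 := by
  rw [Wc_apply]; simp [Pi.single_apply]
@[simp] lemma Wc_t1 (a0 a1 : ℝ) : Wc a0 a1 (0, Pi.single 1 1) = Complex.I * a1 := by
  rw [Wc_apply]; simp [Pi.single_apply]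

/-- The master eigenfunction computation. -/
lemma master (S g0 g1 F00 F01 F10 F11 : (Fin 2 → ℝ) → ℝ) (a0 a1 : ℝ)
    (hS : ∀ y ∈ Om, HasFDerivAt S (DD (g0 y) (g1 y)) y)
    (hF00 : ∀ y ∈ Om, F00 y = Hm y 0 0 * g0 y)
    (hF01 : ∀ y ∈ Om, F01 y = Hm y 0 1 * g1 y)
    (hF10 : ∀ y ∈ Om, F10 y = Hm y 1 0 * g0 y)
    (hF11 : ∀ y ∈ Om, F11 y = Hm y 1 1 * g1 y)
    (hkey : ∀ x ∈ Om, ∃ d00 e00 d01 e01 d10 e10 d11 e11 : ℝ,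
      HasFDerivAt F00 (DD d00 e00) x ∧ HasFDerivAt F01 (DD d01 e01) x ∧
      HasFDerivAt F10 (DD d10 e10) x ∧ HasFDerivAt F11 (DD d11 e11) x ∧
      d00 + d01 + e10 + e11 =
        (Gm x 0 0 * (a0 * a0) + Gm x 0 1 * (a0 * a1) + Gm x 1 0 * (a1 * a0)
          + Gm x 1 1 * (a1 * a1)) * S x - 2 * S x) :
    ∀ x ∈ Om, ∀ t : Fin 2 → ℝ,
      Lop (fun q : EE => (S q.1 : ℂ) * Eex a0 a1 q) (x, t)
        = 2 * ((S x : ℂ) * Eex a0 a1 (x, t)) := by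
  intro x hx t
  obtain ⟨d00, e00, d01, e01, d10, e10, d11, e11, hd00, hd01, hd10, hd11, hid⟩ := hkey x hx
  have hp : ((x, t) : EE).1 ∈ Om := hx
  have T00 := pdx_H_term a0 a1 S g0 g1 F00 0 0 (x, t) hp hS
    (fun y hy => by rw [hF00 y hy]; simp) hd00
  have T01 := pdx_H_term a0 a1 S g0 g1 F01 0 1 (x, t) hp hS
    (fun y hy => by rw [hF01 y hy]; simp) hd01
  have T10 := pdx_H_term a0 a1 S g0 g1 F10 1 0 (x, t) hp hS
    (fun y hy => by rw [hF10 y hy]; simp) hd10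
  have T11 := pdx_H_term a0 a1 S g0 g1 F11 1 1 (x, t) hp hS
    (fun y hy => by rw [hF11 y hy]; simp) hd11
  have U00 := pdt_pdt_pf a0 a1 S g0 g1 0 0 (x, t) hp hS
  have U01 := pdt_pdt_pf a0 a1 S g0 g1 0 1 (x, t) hp hS
  have U10 := pdt_pdt_pf a0 a1 S g0 g1 1 0 (x, t) hp hS
  have U11 := pdt_pdt_pf a0 a1 S g0 g1 1 1 (x, t) hp hS
  unfold Lop
  simp only [Fin.sum_univ_two]
  rw [T00, T01, T10, T11, U00, U01, U10, U11]
  have hG : Gmat ((x, t) : EE).1 = Gm x := Gmat_eq hx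
  rw [hG]
  simp only [DD_e0, DD_e1, Wc_t0, Wc_t1]
  have hidC : ((d00 : ℂ) + d01 + e10 + e11) =
      ((Gm x 0 0 * (a0 * a0) + Gm x 0 1 * (a0 * a1) + Gm x 1 0 * (a1 * a0)
        + Gm x 1 1 * (a1 * a1)) * S x - 2 * S x : ℝ) := by
    exact_mod_cast congrArg (fun r : ℝ => (r : ℂ)) hid
  have hI : (Complex.I * Complex.I) = -1 := Complex.I_mul_I
  push_cast at hidC ⊢
  linear_combination (-(Eex a0 a1 (x, t))) * hidC
    + (-(((Gm x 0 0 : ℝ) : ℂ) * (a0 * a0) + ((Gm x 0 1 : ℝ) : ℂ) * (a0 * a1)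
        + ((Gm x 1 0 : ℝ) : ℂ) * (a1 * a0) + ((Gm x 1 1 : ℝ) : ℂ) * (a1 * a1))
          * (S x : ℂ) * Eex a0 a1 (x, t)) * hI

end Sec3
noncomputable section Sec4

/-! ### Package for `S = sqrt(ell1 * ell3)` -/

def S13 : (Fin 2 → ℝ) → ℝ := fun x => Real.sqrt (ell1 x * ell3 x)
def g13_0 : (Fin 2 → ℝ) → ℝ :=
  fun x => (ell3 x - ell1 x) * Real.sqrt (ell1 x * ell3 x) / (2 * (ell1 x * ell3 x))
def g13_1 : (Fin 2 → ℝ) → ℝ :=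
  fun x => (0 - ell1 x) * Real.sqrt (ell1 x * ell3 x) / (2 * (ell1 x * ell3 x))

lemma hS13 : ∀ x ∈ Om, HasFDerivAt S13 (DD (g13_0 x) (g13_1 x)) x := by
  intro x hx
  have hP := HDD.congr (HDD.mul (hdd_ell1 x) (hdd_ell3 x))
    (show ell1 x * (-1) + ell3 x * 1 = ell3 x - ell1 x by ring)
    (show ell1 x * (-1) + ell3 x * 0 = 0 - ell1 x by ring)
  exact HDD.sqrt hP (mul_pos (l1_pos hx) (l3_pos hx))

def F13_00 : (Fin 2 → ℝ) → ℝ := fun x => h00 x * g13_0 x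
def F13_01 : (Fin 2 → ℝ) → ℝ := fun x => h01 x * g13_1 x
def F13_10 : (Fin 2 → ℝ) → ℝ := fun x => h01 x * g13_0 x
def F13_11 : (Fin 2 → ℝ) → ℝ := fun x => h11 x * g13_1 x

lemma key13 (a0 a1 : ℝ) (ha0 : a0 * a0 = 1) (ha1 : a1 = 0) :
    ∀ x ∈ Om, ∃ d00 e00 d01 e01 d10 e10 d11 e11 : ℝ,
      HasFDerivAt F13_00 (DD d00 e00) x ∧ HasFDerivAt F13_01 (DD d01 e01) x ∧
      HasFDerivAt F13_10 (DD d10 e10) x ∧ HasFDerivAt F13_11 (DD d11 e11) x ∧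
      d00 + d01 + e10 + e11 =
        (Gm x 0 0 * (a0 * a0) + Gm x 0 1 * (a0 * a1) + Gm x 1 0 * (a1 * a0)
          + Gm x 1 1 * (a1 * a1)) * S13 x - 2 * S13 x := by
  intro x hx
  have p1 := l1_pos hx; have p2 := l2_pos hx; have p3 := l3_pos hx
  have hP : (0:ℝ) < ell1 x * ell3 x := mul_pos p1 p3
  have hsq := hS13 x hx
  have hden : (fun y => 2 * (ell1 y * ell3 y)) x ≠ 0 := by
    simp only; positivity
  have hg0 := HDD.div (HDD.mul (HDD.sub (hdd_ell3 x) (hdd_ell1 x)) hsq)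
    (HDD.cmul (HDD.mul (hdd_ell1 x) (hdd_ell3 x)) 2) hden
  have hg1 := HDD.div (HDD.mul (HDD.sub (hdd_const 0 x) (hdd_ell1 x)) hsq)
    (HDD.cmul (HDD.mul (hdd_ell1 x) (hdd_ell3 x)) 2) hden
  refine ⟨_, _, _, _, _, _, _, _, HDD.mul (hdd_h00 x) hg0, HDD.mul (hdd_h01 x) hg1,
    HDD.mul (hdd_h01 x) hg0, HDD.mul (hdd_h11 x) hg1, ?_⟩
  subst ha1
  have hc : Gm x 0 0 * (a0 * a0) + Gm x 0 1 * (a0 * 0) + Gm x 1 0 * (0 * a0)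
      + Gm x 1 1 * (0 * 0) = 1/2 * ((ell1 x)⁻¹ + (ell3 x)⁻¹) := by
    simp only [Gm00, Gm01, Gm10, Gm11]
    linear_combination (1/2 * ((ell1 x)⁻¹ + (ell3 x)⁻¹)) * ha0
  rw [hc]
  have hsp : 0 < Real.sqrt (ell1 x * ell3 x) := Real.sqrt_pos.mpr hP
  have hs0 : Real.sqrt (ell1 x * ell3 x) ≠ 0 := ne_of_gt hsp
  have n1 : ell1 x ≠ 0 := ne_of_gt p1
  have n2 : ell2 x ≠ 0 := ne_of_gt p2
  have n3 : ell3 x ≠ 0 := ne_of_gt p3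
  simp only [S13, g13_0, g13_1, h00, h01, h11, ell1, ell2, ell3] at hs0 hsp n1 n2 n3 ⊢
  field_simp
  ring

/-! ### Package for `S = sqrt(ell1 * ell2)` -/

def S12 : (Fin 2 → ℝ) → ℝ := fun x => Real.sqrt (ell1 x * ell2 x)
def g12_0 : (Fin 2 → ℝ) → ℝ :=
  fun x => ell2 x * Real.sqrt (ell1 x * ell2 x) / (2 * (ell1 x * ell2 x))
def g12_1 : (Fin 2 → ℝ) → ℝ :=
  fun x => ell1 x * Real.sqrt (ell1 x * ell2 x) / (2 * (ell1 x * ell2 x))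

lemma hS12 : ∀ x ∈ Om, HasFDerivAt S12 (DD (g12_0 x) (g12_1 x)) x := by
  intro x hx
  have hP := HDD.congr (HDD.mul (hdd_ell1 x) (hdd_ell2 x))
    (show ell1 x * 0 + ell2 x * 1 = ell2 x by ring)
    (show ell1 x * 1 + ell2 x * 0 = ell1 x by ring)
  exact HDD.sqrt hP (mul_pos (l1_pos hx) (l2_pos hx))

def F12_00 : (Fin 2 → ℝ) → ℝ := fun x => h00 x * g12_0 x
def F12_01 : (Fin 2 → ℝ) → ℝ := fun x => h01 x * g12_1 x
def F12_10 : (Fin 2 → ℝ) → ℝ := fun x => h01 x * g12_0 x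
def F12_11 : (Fin 2 → ℝ) → ℝ := fun x => h11 x * g12_1 x

lemma key12 (a0 a1 : ℝ) (ha0 : a0 * a0 = 1) (ha1 : a1 = -a0) :
    ∀ x ∈ Om, ∃ d00 e00 d01 e01 d10 e10 d11 e11 : ℝ,
      HasFDerivAt F12_00 (DD d00 e00) x ∧ HasFDerivAt F12_01 (DD d01 e01) x ∧
      HasFDerivAt F12_10 (DD d10 e10) x ∧ HasFDerivAt F12_11 (DD d11 e11) x ∧
      d00 + d01 + e10 + e11 =
        (Gm x 0 0 * (a0 * a0) + Gm x 0 1 * (a0 * a1) + Gm x 1 0 * (a1 * a0)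
          + Gm x 1 1 * (a1 * a1)) * S12 x - 2 * S12 x := by
  intro x hx
  have p1 := l1_pos hx; have p2 := l2_pos hx; have p3 := l3_pos hx
  have hP : (0:ℝ) < ell1 x * ell2 x := mul_pos p1 p2
  have hsq := hS12 x hx
  have hden : (fun y => 2 * (ell1 y * ell2 y)) x ≠ 0 := by
    simp only; positivity
  have hg0 := HDD.div (HDD.mul (hdd_ell2 x) hsq)
    (HDD.cmul (HDD.mul (hdd_ell1 x) (hdd_ell2 x)) 2) hden
  have hg1 := HDD.div (HDD.mul (hdd_ell1 x) hsq)
    (HDD.cmul (HDD.mul (hdd_ell1 x) (hdd_ell2 x)) 2) hden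
  refine ⟨_, _, _, _, _, _, _, _, HDD.mul (hdd_h00 x) hg0, HDD.mul (hdd_h01 x) hg1,
    HDD.mul (hdd_h01 x) hg0, HDD.mul (hdd_h11 x) hg1, ?_⟩
  subst ha1
  have hc : Gm x 0 0 * (a0 * a0) + Gm x 0 1 * (a0 * -a0) + Gm x 1 0 * (-a0 * a0)
      + Gm x 1 1 * (-a0 * -a0) = 1/2 * ((ell1 x)⁻¹ + (ell2 x)⁻¹) := by
    simp only [Gm00, Gm01, Gm10, Gm11]
    linear_combination (1/2 * ((ell1 x)⁻¹ + (ell2 x)⁻¹)) * ha0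
  rw [hc]
  have hsp : 0 < Real.sqrt (ell1 x * ell2 x) := Real.sqrt_pos.mpr hP
  have hs0 : Real.sqrt (ell1 x * ell2 x) ≠ 0 := ne_of_gt hsp
  have n1 : ell1 x ≠ 0 := ne_of_gt p1
  have n2 : ell2 x ≠ 0 := ne_of_gt p2
  have n3 : ell3 x ≠ 0 := ne_of_gt p3
  simp only [S12, g12_0, g12_1, h00, h01, h11, ell1, ell2, ell3] at hs0 hsp n1 n2 n3 ⊢
  field_simp
  ring

/-! ### Package for `S = sqrt(ell2 * ell3)` -/

def S23 : (Fin 2 → ℝ) → ℝ := fun x => Real.sqrt (ell2 x * ell3 x)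
def g23_0 : (Fin 2 → ℝ) → ℝ :=
  fun x => (0 - ell2 x) * Real.sqrt (ell2 x * ell3 x) / (2 * (ell2 x * ell3 x))
def g23_1 : (Fin 2 → ℝ) → ℝ :=
  fun x => (ell3 x - ell2 x) * Real.sqrt (ell2 x * ell3 x) / (2 * (ell2 x * ell3 x))

lemma hS23 : ∀ x ∈ Om, HasFDerivAt S23 (DD (g23_0 x) (g23_1 x)) x := by
  intro x hx
  have hP := HDD.congr (HDD.mul (hdd_ell2 x) (hdd_ell3 x))
    (show ell2 x * (-1) + ell3 x * 0 = 0 - ell2 x by ring)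
    (show ell2 x * (-1) + ell3 x * 1 = ell3 x - ell2 x by ring)
  exact HDD.sqrt hP (mul_pos (l2_pos hx) (l3_pos hx))

def F23_00 : (Fin 2 → ℝ) → ℝ := fun x => h00 x * g23_0 x
def F23_01 : (Fin 2 → ℝ) → ℝ := fun x => h01 x * g23_1 x
def F23_10 : (Fin 2 → ℝ) → ℝ := fun x => h01 x * g23_0 x
def F23_11 : (Fin 2 → ℝ) → ℝ := fun x => h11 x * g23_1 x

lemma key23 (a0 a1 : ℝ) (ha1 : a1 * a1 = 1) (ha0 : a0 = 0) :
    ∀ x ∈ Om, ∃ d00 e00 d01 e01 d10 e10 d11 e11 : ℝ,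
      HasFDerivAt F23_00 (DD d00 e00) x ∧ HasFDerivAt F23_01 (DD d01 e01) x ∧
      HasFDerivAt F23_10 (DD d10 e10) x ∧ HasFDerivAt F23_11 (DD d11 e11) x ∧
      d00 + d01 + e10 + e11 =
        (Gm x 0 0 * (a0 * a0) + Gm x 0 1 * (a0 * a1) + Gm x 1 0 * (a1 * a0)
          + Gm x 1 1 * (a1 * a1)) * S23 x - 2 * S23 x := by
  intro x hx
  have p1 := l1_pos hx; have p2 := l2_pos hx; have p3 := l3_pos hx
  have hP : (0:ℝ) < ell2 x * ell3 x := mul_pos p2 p3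
  have hsq := hS23 x hx
  have hden : (fun y => 2 * (ell2 y * ell3 y)) x ≠ 0 := by
    simp only; positivity
  have hg1 := HDD.div (HDD.mul (HDD.sub (hdd_ell3 x) (hdd_ell2 x)) hsq)
    (HDD.cmul (HDD.mul (hdd_ell2 x) (hdd_ell3 x)) 2) hden
  have hg0 := HDD.div (HDD.mul (HDD.sub (hdd_const 0 x) (hdd_ell2 x)) hsq)
    (HDD.cmul (HDD.mul (hdd_ell2 x) (hdd_ell3 x)) 2) hden
  refine ⟨_, _, _, _, _, _, _, _, HDD.mul (hdd_h00 x) hg0, HDD.mul (hdd_h01 x) hg1,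
    HDD.mul (hdd_h01 x) hg0, HDD.mul (hdd_h11 x) hg1, ?_⟩
  subst ha0
  have hc : Gm x 0 0 * ((0:ℝ) * 0) + Gm x 0 1 * (0 * a1) + Gm x 1 0 * (a1 * 0)
      + Gm x 1 1 * (a1 * a1) = 1/2 * ((ell2 x)⁻¹ + (ell3 x)⁻¹) := by
    simp only [Gm00, Gm01, Gm10, Gm11]
    linear_combination (1/2 * ((ell2 x)⁻¹ + (ell3 x)⁻¹)) * ha1
  rw [hc]
  have hsp : 0 < Real.sqrt (ell2 x * ell3 x) := Real.sqrt_pos.mpr hP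
  have hs0 : Real.sqrt (ell2 x * ell3 x) ≠ 0 := ne_of_gt hsp
  have n1 : ell1 x ≠ 0 := ne_of_gt p1
  have n2 : ell2 x ≠ 0 := ne_of_gt p2
  have n3 : ell3 x ≠ 0 := ne_of_gt p3
  simp only [S23, g23_0, g23_1, h00, h01, h11, ell1, ell2, ell3] at hs0 hsp n1 n2 n3 ⊢
  field_simp
  ring

/-! ### The six eigenfunction computations -/

lemma eigen13 (a0 a1 : ℝ) (ha0 : a0 * a0 = 1) (ha1 : a1 = 0) :
    ∀ x ∈ Om, ∀ t : Fin 2 → ℝ,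
      Lop (fun q : EE => (S13 q.1 : ℂ) * Eex a0 a1 q) (x, t)
        = 2 * ((S13 x : ℂ) * Eex a0 a1 (x, t)) :=
  master S13 g13_0 g13_1 F13_00 F13_01 F13_10 F13_11 a0 a1 hS13
    (fun y _ => by rw [Hm00]; rfl) (fun y _ => by rw [Hm01]; rfl)
    (fun y _ => by rw [Hm10]; rfl) (fun y _ => by rw [Hm11]; rfl)
    (key13 a0 a1 ha0 ha1)

lemma eigen12 (a0 a1 : ℝ) (ha0 : a0 * a0 = 1) (ha1 : a1 = -a0) :
    ∀ x ∈ Om, ∀ t : Fin 2 → ℝ,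
      Lop (fun q : EE => (S12 q.1 : ℂ) * Eex a0 a1 q) (x, t)
        = 2 * ((S12 x : ℂ) * Eex a0 a1 (x, t)) :=
  master S12 g12_0 g12_1 F12_00 F12_01 F12_10 F12_11 a0 a1 hS12
    (fun y _ => by rw [Hm00]; rfl) (fun y _ => by rw [Hm01]; rfl)
    (fun y _ => by rw [Hm10]; rfl) (fun y _ => by rw [Hm11]; rfl)
    (key12 a0 a1 ha0 ha1)

lemma eigen23 (a0 a1 : ℝ) (ha1 : a1 * a1 = 1) (ha0 : a0 = 0) :
    ∀ x ∈ Om, ∀ t : Fin 2 → ℝ,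
      Lop (fun q : EE => (S23 q.1 : ℂ) * Eex a0 a1 q) (x, t)
        = 2 * ((S23 x : ℂ) * Eex a0 a1 (x, t)) :=
  master S23 g23_0 g23_1 F23_00 F23_01 F23_10 F23_11 a0 a1 hS23
    (fun y _ => by rw [Hm00]; rfl) (fun y _ => by rw [Hm01]; rfl)
    (fun y _ => by rw [Hm10]; rfl) (fun y _ => by rw [Hm11]; rfl)
    (key23 a0 a1 ha1 ha0)

end Sec4

/-- Section 6.1: the six root functions of `ℂP²` are eigenfunctions with eigenvalue `2`
of the complex toric Laplacian of the Fubini-Study metric. -/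
theorem stmt16 :
    ∀ x ∈ {x : Fin 2 → ℝ | -1 < x 0 ∧ -1 < x 1 ∧ x 0 + x 1 < 1}, ∀ t : Fin 2 → ℝ,
      Lop v1 (x, t) = 2 * v1 (x, t) ∧ Lop v2 (x, t) = 2 * v2 (x, t)
      ∧ Lop v3 (x, t) = 2 * v3 (x, t) ∧ Lop v4 (x, t) = 2 * v4 (x, t)
      ∧ Lop v5 (x, t) = 2 * v5 (x, t) ∧ Lop v6 (x, t) = 2 * v6 (x, t) := by
  intro x hx t
  have hx' : x ∈ Om := hx
  have hv1 : v1 = fun q : EE => (S13 q.1 : ℂ) * Eex (-1) 0 q := by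
    funext q; unfold v1 S13 Eex; congr 1; push_cast; ring
  have hv2 : v2 = fun q : EE => (S12 q.1 : ℂ) * Eex (-1) 1 q := by
    funext q; unfold v2 S12 Eex; congr 1; push_cast; ring
  have hv3 : v3 = fun q : EE => (S23 q.1 : ℂ) * Eex 0 (-1) q := by
    funext q; unfold v3 S23 Eex; congr 1; push_cast; ring
  have hv4 : v4 = fun q : EE => (S12 q.1 : ℂ) * Eex 1 (-1) q := by
    funext q; unfold v4 S12 Eex; congr 1; push_cast; ring
  have hv5 : v5 = fun q : EE => (S13 q.1 : ℂ) * Eex 1 0 q := by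
    funext q; unfold v5 S13 Eex; congr 1; push_cast; ring
  have hv6 : v6 = fun q : EE => (S23 q.1 : ℂ) * Eex 0 1 q := by
    funext q; unfold v6 S23 Eex; congr 1; push_cast; ring
  refine ⟨?_, ?_, ?_, ?_, ?_, ?_⟩
  · rw [hv1]; simpa using eigen13 (-1) 0 (by norm_num) rfl x hx' t
  · rw [hv2]; simpa using eigen12 (-1) 1 (by norm_num) (by norm_num) x hx' t
  · rw [hv3]; simpa using eigen23 0 (-1) (by norm_num) rfl x hx' t
  · rw [hv4]; simpa using eigen12 1 (-1) (by norm_num) (by norm_num) x hx' t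
  · rw [hv5]; simpa using eigen13 1 0 (by norm_num) rfl x hx' t
  · rw [hv6]; simpa using eigen23 0 1 (by norm_num) rfl x hx' t
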